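/- Let (e_j, f_j), j = 1, …, n, be pairwise orthogonal hyperbolic pairs, and set Σ₂ₙ := i^n * ∏_{j=1}^n (1 − ι e_j * ι f_j). Then star Σ₂ₙ = (−1)^n * Σ₂ₙ, and consequently Σ₂ₙ * star Σ₂ₙ = 1 and star Σ₂ₙ * Σ₂ₙ = 1, i.e. Σ₂ₙ is a unitary element of the Clifford algebra. -/

import Mathlib

open CliffordAlgebra QuadraticMap

private lemma star_listProd {A : Type*} [Monoid A] [StarMul A] :
    ∀ l : List A, star l.prod = (l.map star).reverse.prod
  | [] => by simp
  | a :: t => by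
    simp [List.prod_cons, star_mul, star_listProd t, List.prod_append]

private lemma listProd_sq {A : Type*} [Monoid A] :
    ∀ l : List A, l.Pairwise Commute → (∀ x ∈ l, x * x = 1) → l.prod * l.prod = 1
  | [], _, _ => by simp
  | a :: t, hp, hx => by
    obtain ⟨h1, h2⟩ := List.pairwise_cons.mp hp
    have hc : Commute (t.prod) a :=
      (Commute.list_prod_right _ _ (fun y hy => (h1 y hy))).symm
    have ht := listProd_sq t h2 (fun x hx' => hx x (List.mem_cons_of_mem _ hx'))
    have ha := hx a List.mem_cons_self
    simp only [List.prod_cons]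
    rw [hc.mul_mul_mul_comm, ha, ht, one_mul]

private lemma prod_map_neg' {A : Type*} [Monoid A] [HasDistribNeg A] (l : List A) :
    (l.map Neg.neg).prod = (-1) ^ l.length * l.prod := by
  induction l <;> simp [*, pow_succ, ((Commute.neg_one_left _).pow_left _).left_comm]

private lemma bivec_comm {A : Type*} [Ring A] {u v x y : A}
    (hux : u * x = -(x * u)) (huy : u * y = -(y * u))
    (hvx : v * x = -(x * v)) (hvy : v * y = -(y * v)) :
    Commute (u * v) (x * y) := by
  show u * v * (x * y) = x * y * (u * v)
  calc u * v * (x * y) = u * (v * x) * y := by noncomm_ring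
    _ = u * (-(x * v)) * y := by rw [hvx]
    _ = -((u * x) * (v * y)) := by noncomm_ring
    _ = -((-(x * u)) * (v * y)) := by rw [hux]
    _ = (x * u) * (v * y) := by noncomm_ring
    _ = (x * u) * (-(y * v)) := by rw [hvy]
    _ = -((x * (u * y)) * v) := by noncomm_ring
    _ = -((x * (-(y * u))) * v) := by rw [huy]
    _ = x * y * (u * v) := by noncomm_ring

/-- Let `(e j, f j)`, `j = 1, …, n`, be pairwise orthogonal hyperbolic pairs and
`Σ₂ₙ = i^n • ∏ j (1 - ι (e j) * ι (f j))`.  Then `star Σ₂ₙ = (-1)^n * Σ₂ₙ`, and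
`Σ₂ₙ` is unitary: `Σ₂ₙ * star Σ₂ₙ = 1` and `star Σ₂ₙ * Σ₂ₙ = 1`. -/
theorem sigma_even_star {V : Type*} [AddCommGroup V] [Module ℂ V]
    (Q : QuadraticForm ℂ V) (n : ℕ) (e f : Fin n → V)
    (hQe : ∀ j, Q (e j) = 0) (hQf : ∀ j, Q (f j) = 0)
    (hef : ∀ j, polar Q (e j) (f j) = 2)
    (horth : ∀ i j, i ≠ j →
      polar Q (e i) (e j) = 0 ∧ polar Q (e i) (f j) = 0 ∧ polar Q (f i) (f j) = 0)
    (S : CliffordAlgebra Q)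
    (hS : S = (Complex.I ^ n) •
      (List.ofFn (fun j : Fin n => 1 - ι Q (e j) * ι Q (f j))).prod) :
    star S = (-1) ^ n * S ∧ S * star S = 1 ∧ star S * S = 1 := by
  set a : Fin n → CliffordAlgebra Q := fun j => 1 - ι Q (e j) * ι Q (f j) with ha
  set L : List (CliffordAlgebra Q) := List.ofFn a with hL
  -- anticommutation from vanishing polar
  have anti : ∀ x y : V, polar Q x y = 0 → ι Q x * ι Q y = -(ι Q y * ι Q x) := by
    intro x y h
    rw [ι_mul_ι_comm, h, map_zero, zero_sub]
  -- `f e = 2 - e f` for each pair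
  have hfe : ∀ j, ι Q (f j) * ι Q (e j) = 2 - ι Q (e j) * ι Q (f j) := by
    intro j
    have := ι_mul_ι_comm (Q := Q) (f j) (e j)
    rw [polar_comm, hef j] at this
    have h2 : algebraMap ℂ (CliffordAlgebra Q) 2 = 2 := by
      rw [show (2:ℂ) = ((2:ℕ):ℂ) by norm_num, map_natCast]; norm_num
    simpa [h2] using this
  -- each factor squares to 1
  have hsq : ∀ j, a j * a j = 1 := by
    intro j
    have he2 : ι Q (e j) * ι Q (e j) = 0 := by rw [ι_sq_scalar, hQe, map_zero]
    have key : (ι Q (e j) * ι Q (f j)) * (ι Q (e j) * ι Q (f j))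
        = 2 * (ι Q (e j) * ι Q (f j)) := by
      calc (ι Q (e j) * ι Q (f j)) * (ι Q (e j) * ι Q (f j))
          = ι Q (e j) * (ι Q (f j) * ι Q (e j)) * ι Q (f j) := by noncomm_ring
        _ = ι Q (e j) * (2 - ι Q (e j) * ι Q (f j)) * ι Q (f j) := by rw [hfe j]
        _ = 2 * (ι Q (e j) * ι Q (f j))
            - (ι Q (e j) * ι Q (e j)) * (ι Q (f j) * ι Q (f j)) := by noncomm_ring
        _ = 2 * (ι Q (e j) * ι Q (f j)) := by rw [he2, zero_mul, sub_zero]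
    calc a j * a j
        = 1 - 2 * (ι Q (e j) * ι Q (f j))
          + (ι Q (e j) * ι Q (f j)) * (ι Q (e j) * ι Q (f j)) := by
          simp only [ha]; noncomm_ring
      _ = 1 := by rw [key, sub_add_cancel]
  -- each factor is sent to its negative by star
  have hstar : ∀ j, star (a j) = -(a j) := by
    intro j
    have : star (a j) = 1 - ι Q (f j) * ι Q (e j) := by
      simp [ha, star_sub, star_mul, star_ι]
    rw [this, hfe j, ha, show (2:CliffordAlgebra Q) = 1 + 1 from one_add_one_eq_two.symm]
    noncomm_ring
  -- the factors pairwise commute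
  have hcomm : ∀ i j, i ≠ j → Commute (a i) (a j) := by
    intro i j hij
    have h1 := (horth i j hij).1
    have h2 := (horth i j hij).2.1
    have h3 := (horth i j hij).2.2
    have h4 : polar Q (f i) (e j) = 0 := by
      rw [polar_comm]; exact (horth j i hij.symm).2.1
    have hb : Commute (ι Q (e i) * ι Q (f i)) (ι Q (e j) * ι Q (f j)) :=
      bivec_comm (anti _ _ h1) (anti _ _ h2) (anti _ _ h4) (anti _ _ h3)
    exact (Commute.one_left _).sub_left
      ((Commute.one_right _).sub_right hb)
  have hpair : L.Pairwise Commute := by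
    rw [hL, List.pairwise_ofFn]
    intro i j hij
    exact hcomm i j (Fin.ne_of_lt hij)
  have hlen : L.length = n := by simp [hL]
  -- star of the product
  have hmap : L.map star = L.map Neg.neg := by
    apply List.map_congr_left
    intro x hx
    rw [hL, List.mem_ofFn] at hx
    obtain ⟨j, rfl⟩ := hx
    exact hstar j
  have hrev : L.reverse.prod = L.prod :=
    (L.reverse_perm).prod_eq' (by
      rw [List.pairwise_reverse]
      exact hpair.imp fun h => h.symm)
  have hPstar : star L.prod = (-1 : CliffordAlgebra Q) ^ n * L.prod := by
    rw [star_listProd, hmap, ← List.map_reverse, prod_map_neg',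
      List.length_reverse, hlen, hrev]
  have hPsq : L.prod * L.prod = 1 := by
    apply listProd_sq L hpair
    intro x hx
    rw [hL, List.mem_ofFn] at hx
    obtain ⟨j, rfl⟩ := hx
    exact hsq j
  -- main computations
  have hstarS : star S = (-1) ^ n * S := by
    rw [hS, CliffordAlgebra.star_smul, hPstar, mul_smul_comm]
  have hSS : S * S = algebraMap ℂ _ ((-1 : ℂ) ^ n) := by
    rw [hS, smul_mul_smul_comm, hPsq, ← pow_add, ← two_mul, pow_mul, Complex.I_sq,
      Algebra.algebraMap_eq_smul_one]
  have hkey : ((-1 : CliffordAlgebra Q) ^ n) * (-1) ^ n = 1 := by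
    rw [← pow_add, ← two_mul, pow_mul, neg_one_sq, one_pow]
  have hmain : S * star S = 1 := by
    rw [hstarS, ← mul_assoc, ← ((Commute.neg_one_left S).pow_left n).eq, mul_assoc, hSS,
      map_pow, _root_.map_neg, map_one, hkey]
  refine ⟨hstarS, hmain, ?_⟩
  rw [hstarS, mul_assoc, hSS, map_pow, _root_.map_neg, map_one, hkey]
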